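/- Let X, Y ∈ ℂ^{n×m} satisfy YX†X = Y and X*Y + Y*X positive semidefinite. Then the matrix ℋ = YX† − (YX†)*(I_n − XX†) satisfies ℋX = Y and ℋ + ℋ* positive semidefinite; moreover ‖ℋ‖_F² = 2‖YX†‖_F² − trace((YX†)* XX† (YX†)). -/

import Mathlib

open Matrix
open scoped ComplexOrder

/-- `Xd` is the Moore–Penrose pseudoinverse of `X` (the four Penrose conditions). -/
def IsMoorePenroseInv {m n : Type*} [Fintype m] [Fintype n]
    (X : Matrix m n ℂ) (Xd : Matrix n m ℂ) : Prop :=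
  X * Xd * X = X ∧ Xd * X * Xd = Xd ∧ (X * Xd)ᴴ = X * Xd ∧ (Xd * X)ᴴ = Xd * X

/-- Squared Frobenius norm of a complex matrix. -/
noncomputable def frobSq {r q : ℕ} (A : Matrix (Fin r) (Fin q) ℂ) : ℝ :=
  ∑ i, ∑ j, ‖A i j‖ ^ 2

lemma frobSq_eq_trace {r q : ℕ} (A : Matrix (Fin r) (Fin q) ℂ) :
    frobSq A = ((Aᴴ * A).trace).re := by
  unfold frobSq
  rw [Matrix.trace, Complex.re_sum]
  rw [Finset.sum_comm]
  refine Finset.sum_congr rfl fun j _ => ?_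
  simp only [Matrix.diag_apply, Matrix.mul_apply, Matrix.conjTranspose_apply,
    Complex.re_sum]
  refine Finset.sum_congr rfl fun i _ => ?_
  rw [Complex.star_def, ← Complex.normSq_eq_conj_mul_self]
  simp [Complex.sq_norm]

theorem minimal_dissipative_mapping_properties
    {n m : ℕ} (X Y : Matrix (Fin n) (Fin m) ℂ)
    (Xd : Matrix (Fin m) (Fin n) ℂ) (hXd : IsMoorePenroseInv X Xd)
    (h1 : Y * Xd * X = Y) (h2 : (Xᴴ * Y + Yᴴ * X).PosSemidef)
    (H : Matrix (Fin n) (Fin n) ℂ)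
    (hH : H = Y * Xd - (Y * Xd)ᴴ * (1 - X * Xd)) :
    H * X = Y ∧ (H + Hᴴ).PosSemidef ∧
      frobSq H = 2 * frobSq (Y * Xd)
        - (((Y * Xd)ᴴ * (X * Xd) * (Y * Xd)).trace).re := by
  obtain ⟨p1, p2, p3, p4⟩ := hXd
  set Z := Y * Xd with hZ
  set P := X * Xd with hPdef
  have hPX : P * X = X := by rw [hPdef]; exact p1
  have hP2 : P * P = P := by
    rw [hPdef, ← Matrix.mul_assoc, p1]
  have hPH : Pᴴ = P := p3
  have hZP : Z * P = Z := by
    rw [hZ, hPdef, ← Matrix.mul_assoc, h1]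
  have hZX : Z * X = Y := by rw [hZ]; exact h1
  have hQX : (1 - P) * X = 0 := by
    rw [Matrix.sub_mul, Matrix.one_mul, hPX, sub_self]
  -- part 1
  have part1 : H * X = Y := by
    rw [hH, Matrix.sub_mul, Matrix.mul_assoc Zᴴ, hQX, Matrix.mul_zero, sub_zero, hZX]
  -- part 2
  have hPfact : P = Xdᴴ * Xᴴ := by
    rw [← hPH, hPdef, Matrix.conjTranspose_mul]
  have hsum : H + Hᴴ = Xdᴴ * (Xᴴ * Y + Yᴴ * X) * Xd := by
    have key : H + Hᴴ = Zᴴ * P + P * Z := by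
      rw [hH]
      simp only [Matrix.conjTranspose_sub, Matrix.conjTranspose_mul,
        Matrix.conjTranspose_one, Matrix.conjTranspose_conjTranspose, hPH]
      noncomm_ring
    have e1 : Zᴴ * P = Xdᴴ * Yᴴ * X * Xd := by
      rw [hZ, hPdef, Matrix.conjTranspose_mul, ← Matrix.mul_assoc]
    have e2 : P * Z = Xdᴴ * Xᴴ * Y * Xd := by
      rw [hPfact, hZ, ← Matrix.mul_assoc]
    rw [key, e1, e2, Matrix.mul_add, Matrix.add_mul]
    simp only [← Matrix.mul_assoc]
    abel
  have part2 : (H + Hᴴ).PosSemidef := by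
    rw [hsum]
    exact h2.conjTranspose_mul_mul_same Xd
  -- part 3
  refine ⟨part1, part2, ?_⟩
  have hQZH : (1 - P) * Zᴴ = 0 := by
    have hc := congrArg Matrix.conjTranspose hZP
    simp only [Matrix.conjTranspose_mul, hPH] at hc
    rw [Matrix.sub_mul, Matrix.one_mul, hc, sub_self]
  have hZQ : Z * (1 - P) = 0 := by
    rw [Matrix.mul_sub, Matrix.mul_one, hZP, sub_self]
  have hQ2 : (1 - P) * (1 - P) = 1 - P := by
    rw [Matrix.mul_sub, Matrix.mul_one, Matrix.sub_mul, Matrix.one_mul, hP2]; abel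
  have hHH : Hᴴ * H = Zᴴ * Z - Zᴴ * (Zᴴ * (1 - P)) - ((1 - P) * Z) * Z
      + (1 - P) * Z * (Zᴴ * (1 - P)) := by
    rw [hH]
    simp only [Matrix.conjTranspose_sub, Matrix.conjTranspose_mul,
      Matrix.conjTranspose_one, Matrix.conjTranspose_conjTranspose, hPH]
    noncomm_ring
  have htr : (Hᴴ * H).trace = (Zᴴ * Z).trace + (Zᴴ * Z).trace
      - (Zᴴ * P * Z).trace := by
    rw [hHH, Matrix.trace_add, Matrix.trace_sub, Matrix.trace_sub]
    have t1 : (Zᴴ * (Zᴴ * (1 - P))).trace = 0 := by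
      rw [Matrix.trace_mul_comm, Matrix.mul_assoc, hQZH, Matrix.mul_zero,
        Matrix.trace_zero]
    have t2 : (((1 - P) * Z) * Z).trace = 0 := by
      rw [Matrix.trace_mul_comm, ← Matrix.mul_assoc, hZQ, Matrix.zero_mul,
        Matrix.trace_zero]
    have t3 : ((1 - P) * Z * (Zᴴ * (1 - P))).trace = (Zᴴ * Z).trace
        - (Zᴴ * P * Z).trace := by
      rw [Matrix.trace_mul_comm]
      have e : Zᴴ * (1 - P) * ((1 - P) * Z) = Zᴴ * ((1 - P) * (1 - P)) * Z := by
        noncomm_ring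
      rw [e, hQ2]
      have e2 : Zᴴ * (1 - P) * Z = Zᴴ * Z - Zᴴ * P * Z := by noncomm_ring
      rw [e2, Matrix.trace_sub]
    rw [t1, t2, t3]; ring
  rw [frobSq_eq_trace, frobSq_eq_trace, htr]
  simp [Complex.sub_re, Complex.add_re]
  ring
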